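/- Let C ≥ 2 and 1 ≤ K ≤ C be integers and let η ∈ ℝ^C be a conditional probability vector with pairwise distinct entries. A score vector s ∈ ℝ^C minimizes the conditional AUTKC risk R_K(·, η) over ℝ^C if and only if s is top-K ranking-preserving with respect to η. -/

import Mathlib

/-- The `k`-th largest entry (1-indexed, counted with multiplicity) of `s ∈ ℝ^C`. -/
noncomputable def kthLargest {C : ℕ} (s : Fin C → ℝ) (k : ℕ) : ℝ :=
  ((List.ofFn s).insertionSort (· ≤ ·)).getD (C - k) 0

open Classical in
/-- The rank of label `y` under the score vector `s`, with worst-case tie-breaking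
relative to `η`: `π_s(y) = 1 + |{j : s_j > s_y}| + |{j : s_j = s_y ∧ η_j < η_y}|`. -/
noncomputable def rankW {C : ℕ} (η s : Fin C → ℝ) (y : Fin C) : ℕ :=
  1 + (Finset.univ.filter fun j => s y < s j).card
    + (Finset.univ.filter fun j => s j = s y ∧ η j < η y).card

/-- The conditional AUTKC risk `R_K(s, η) = (1/K) Σ_y η_y · min{π_s(y) − 1, K}`. -/
noncomputable def condRisk {C : ℕ} (K : ℕ) (η s : Fin C → ℝ) : ℝ :=
  (1 / (K : ℝ)) * ∑ y : Fin C, η y * (min (rankW η s y - 1) K : ℕ)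

/-- `s` is top-`K` ranking-preserving w.r.t. `η`: for every label `y` and every
`k ∈ {1,…,K}`, `π_s(y) = k` implies that `η_y` is the `k`-th largest entry of `η`. -/
def RPK {C : ℕ} (K : ℕ) (η s : Fin C → ℝ) : Prop :=
  ∀ y : Fin C, ∀ k : ℕ, 1 ≤ k → k ≤ K → rankW η s y = k → η y = kthLargest η k

section AuxCnt
variable {C : ℕ} {α : Type*} [LinearOrder α]

/-- number of strictly greater entries -/
def cntGT (f : Fin C → α) (y : Fin C) : ℕ :=
  (Finset.univ.filter fun j => f y < f j).card

lemma cntGT_lt (f : Fin C → α) (y : Fin C) : cntGT f y < C := by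
  have h : (Finset.univ.filter fun j => f y < f j) ⊂ Finset.univ := by
    refine Finset.ssubset_iff_of_subset (Finset.subset_univ _) |>.mpr ⟨y, Finset.mem_univ _, ?_⟩
    simp
  simpa [cntGT] using Finset.card_lt_card h

lemma cntGT_lt_of_lt {f : Fin C → α} {y z : Fin C} (h : f y < f z) :
    cntGT f z < cntGT f y := by
  apply Finset.card_lt_card
  constructor
  · intro j hj
    simp only [Finset.mem_filter, Finset.mem_univ, true_and] at hj ⊢
    exact h.trans hj
  · intro hsub
    have := hsub (by simp [h] : z ∈ Finset.univ.filter fun j => f y < f j)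
    simp at this

lemma cntGT_injective {f : Fin C → α} (hf : Function.Injective f) :
    Function.Injective (cntGT f) := by
  intro y z h
  by_contra hne
  rcases lt_trichotomy (f y) (f z) with hlt | heq | hlt
  · exact absurd h (by have := cntGT_lt_of_lt hlt; omega)
  · exact hne (hf heq)
  · exact absurd h (by have := cntGT_lt_of_lt hlt; omega)

/-- The equiv given by counting strictly greater entries. -/
noncomputable def cntEquiv (f : Fin C → α) (hf : Function.Injective f) : Fin C ≃ Fin C :=
  Equiv.ofBijective (fun y => ⟨cntGT f y, cntGT_lt f y⟩)
    ((Finite.injective_iff_bijective).mp fun y z h => cntGT_injective hf (by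
      simpa using congrArg Fin.val h))

@[simp] lemma cntEquiv_apply (f : Fin C → α) (hf) (y) :
    ((cntEquiv f hf y : Fin C) : ℕ) = cntGT f y := rfl

end AuxCnt

section AuxKth
variable {C : ℕ} {η : Fin C → ℝ}

lemma card_filter_eq_countP (η : Fin C → ℝ) (x : ℝ) :
    (Finset.univ.filter fun j => x < η j).card
      = (List.ofFn η).countP (fun z => decide (x < z)) := by
  rw [List.ofFn_eq_map, List.countP_map, Fin.univ_def]
  simp only [Finset.filter, Finset.card, Function.comp, List.countP_eq_length_filter]
  rfl

lemma sorted_countP_gt (L : List ℝ) (h : L.Pairwise (· < ·)) (i : ℕ) (hi : i < L.length)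
    (x : ℝ) (hx : L[i] = x) :
    L.countP (fun z => decide (x < z)) = L.length - 1 - i := by
  conv_lhs => rw [← List.take_append_drop (i+1) L]
  rw [List.countP_append]
  have h1 : (L.take (i+1)).countP (fun z => decide (x < z)) = 0 := by
    rw [List.countP_eq_zero]
    intro a ha
    obtain ⟨j, hj, rfl⟩ := List.mem_iff_getElem.mp ha
    have hj' : j < i + 1 := lt_of_lt_of_le hj (by simp [List.length_take])
    rw [List.getElem_take]
    simp only [decide_eq_true_eq]
    subst hx
    rcases Nat.lt_or_ge j i with hji | hji
    · exact not_lt.mpr (le_of_lt ((List.pairwise_iff_getElem.mp h) j i (by omega) hi hji))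
    · have : j = i := by omega
      subst this; exact lt_irrefl _
  have h2 : (L.drop (i+1)).countP (fun z => decide (x < z)) = (L.drop (i+1)).length := by
    rw [List.countP_eq_length]
    intro a ha
    obtain ⟨j, hj, rfl⟩ := List.mem_iff_getElem.mp ha
    rw [List.getElem_drop]
    simp only [decide_eq_true_eq]
    subst hx
    exact (List.pairwise_iff_getElem.mp h) i (i+1+j) hi (by simp [List.length_drop] at hj; omega)
      (by omega)
  rw [h1, h2, List.length_drop]
  omega

lemma kthLargest_cntGT (hη : Function.Injective η) (y : Fin C) :
    kthLargest η (cntGT η y + 1) = η y := by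
  set L := (List.ofFn η).insertionSort (· ≤ ·) with hL
  have hperm : L.Perm (List.ofFn η) := List.perm_insertionSort _ _
  have hsort : L.Pairwise (· ≤ ·) := List.pairwise_insertionSort _ _
  have hnodup : L.Nodup := hperm.nodup_iff.mpr (List.nodup_ofFn.mpr hη)
  have hlen : L.length = C := by rw [hperm.length_eq, List.length_ofFn]
  have hslt : L.Pairwise (· < ·) := (hsort.and hnodup).imp fun h => lt_of_le_of_ne h.1 h.2
  have hmem : η y ∈ L := hperm.mem_iff.mpr (by simp [List.mem_ofFn])
  obtain ⟨i, hi, hgi⟩ := List.getElem_of_mem hmem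
  have hcnt : cntGT η y = L.length - 1 - i := by
    rw [cntGT, card_filter_eq_countP, ← hperm.countP_eq, sorted_countP_gt L hslt i hi _ hgi]
  have hiC : i < C := hlen ▸ hi
  have hnC : cntGT η y < C := cntGT_lt η y
  have hidx : C - (cntGT η y + 1) = i := by omega
  rw [kthLargest, ← hL, hidx, List.getD_eq_getElem L 0 (by omega : i < L.length), hgi]

lemma kthLargest_injOn (hη : Function.Injective η) {k1 k2 : ℕ} (h1 : k1 < C) (h2 : k2 < C)
    (h : kthLargest η (k1 + 1) = kthLargest η (k2 + 1)) : k1 = k2 := by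
  set L := (List.ofFn η).insertionSort (· ≤ ·) with hL
  have hperm : L.Perm (List.ofFn η) := List.perm_insertionSort _ _
  have hnodup : L.Nodup := hperm.nodup_iff.mpr (List.nodup_ofFn.mpr hη)
  have hlen : L.length = C := by rw [hperm.length_eq, List.length_ofFn]
  rw [kthLargest, kthLargest, ← hL] at h
  rw [List.getD_eq_getElem L 0 (by omega), List.getD_eq_getElem L 0 (by omega)] at h
  have := (List.Nodup.getElem_inj_iff hnodup).mp h
  omega

end AuxKth

section AuxRearr
variable {C K : ℕ}

noncomputable def wv (K : ℕ) {C : ℕ} (i : Fin C) : ℝ := ((min (i : ℕ) K : ℕ) : ℝ)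

lemma wv_lt_iff {i j : Fin C} : wv K i < wv K j ↔ ((i:ℕ) < j ∧ (i:ℕ) < K) := by
  rw [wv, wv, Nat.cast_lt]
  omega

lemma antivary_wv {b : Fin C → ℝ} (hb : StrictAnti b) : Antivary b (wv K) := by
  intro i j h
  exact (hb (show i < j from Fin.lt_def.mpr (wv_lt_iff.mp h).1)).le

lemma antivary_comp_iff {b : Fin C → ℝ} (hb : StrictAnti b) (σ : Equiv.Perm (Fin C)) :
    Antivary b (wv K ∘ σ) ↔ ∀ i : Fin C, ((σ i : Fin C) : ℕ) < K → σ i = i := by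
  constructor
  · intro hA
    have H1 : ∀ i j : Fin C, ((σ j : Fin C):ℕ) < ((σ i : Fin C):ℕ) → ((σ j : Fin C):ℕ) < K →
        j ≤ i := by
      intro i j h1 h2
      have hg : wv K (σ j) < wv K (σ i) := wv_lt_iff.mpr ⟨h1, h2⟩
      have hbij : b i ≤ b j := hA hg
      by_contra hc
      exact absurd hbij (not_le.mpr (hb (not_le.mp hc)))
    have DC : ∀ a c : Fin C, a < c → ((σ c : Fin C):ℕ) < K →
        ((σ a : Fin C):ℕ) < ((σ c : Fin C):ℕ) := by
      intro a c hac hK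
      by_contra hc
      have hne : ((σ c : Fin C):ℕ) ≠ ((σ a : Fin C):ℕ) := by
        intro h
        exact absurd (σ.injective (Fin.ext h)) (by intro h'; subst h'; exact lt_irrefl _ hac)
      have : ((σ c : Fin C):ℕ) < ((σ a : Fin C):ℕ) := by omega
      exact absurd (H1 a c this hK) (not_le.mpr hac)
    have main : ∀ n : ℕ, ∀ i : Fin C, (i:ℕ) = n → ((σ i : Fin C):ℕ) < K → σ i = i := by
      intro n
      induction n using Nat.strong_induction_on with
      | _ n IH =>
        intro i hin hK
        rcases lt_trichotomy ((σ i : Fin C):ℕ) (i:ℕ) with hlt | heq | hgt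
        · exfalso
          have hσσ := DC (σ i) i (Fin.lt_def.mpr hlt) hK
          have hfix := IH ((σ i : Fin C):ℕ) (by omega) (σ i) rfl (by omega)
          exact absurd (congrArg Fin.val (σ.injective hfix)) (by omega)
        · exact Fin.ext heq
        · exfalso
          have hm : σ (σ.symm i) = i := σ.apply_symm_apply i
          rcases lt_trichotomy ((σ.symm i : Fin C):ℕ) (i:ℕ) with h1 | h2 | h3
          · have := IH ((σ.symm i : Fin C):ℕ) (by omega) (σ.symm i) rfl
              (by rw [hm]; omega)
            rw [hm] at this
            exact absurd (congrArg Fin.val this) (by omega)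
          · have h2' : σ.symm i = i := Fin.ext h2
            rw [h2'] at hm
            rw [hm] at hgt
            omega
          · have := DC i (σ.symm i) (Fin.lt_def.mpr h3) (by rw [hm]; omega)
            rw [hm] at this
            omega
    intro i
    exact main (i:ℕ) i rfl
  · intro hfix
    have hfix2 : ∀ i : Fin C, (i:ℕ) < K → σ i = i := by
      intro i h
      have hm : σ (σ.symm i) = i := σ.apply_symm_apply i
      have h2 := hfix (σ.symm i) (by rw [hm]; exact h)
      have h' : σ.symm i = i := h2.symm.trans hm
      simpa [h'] using hm
    intro i j hg
    simp only [Function.comp] at hg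
    obtain ⟨h1, h2⟩ := wv_lt_iff.mp hg
    have hi : σ i = i := hfix i h2
    rcases le_or_gt i j with hle | hlt
    · exact hb.antitone hle
    · exfalso
      have hlt' := Fin.lt_def.mp hlt
      rcases Nat.lt_or_ge (j:ℕ) K with hjK | hjK
      · have hjj : σ j = j := hfix2 j hjK
        rw [hi, hjj] at h1
        omega
      · rw [hi] at h2
        omega

end AuxRearr

section AuxKey
variable {C : ℕ}

/-- Lexicographic key combining the score (descending priority) with the conditional
probability (ascending as tie-break). -/
noncomputable def keyF (η t : Fin C → ℝ) (z : Fin C) : Lex (ℝ × ℝᵒᵈ) :=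
  toLex (t z, OrderDual.toDual (η z))

lemma keyF_injective {η : Fin C → ℝ} (hη : Function.Injective η) (t : Fin C → ℝ) :
    Function.Injective (keyF η t) := by
  intro a c h
  rw [keyF, keyF, toLex.injective.eq_iff, Prod.mk.injEq] at h
  exact hη (OrderDual.toDual.injective h.2)

lemma rankW_eq (η t : Fin C → ℝ) (y : Fin C) :
    rankW η t y = 1 + cntGT (keyF η t) y := by
  classical
  have h1 : (Finset.univ.filter fun j => keyF η t y < keyF η t j)
      = (Finset.univ.filter fun j => t y < t j)
        ∪ (Finset.univ.filter fun j => t j = t y ∧ η j < η y) := by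
    rw [← Finset.filter_or]
    apply Finset.filter_congr
    intro j _
    rw [keyF, keyF, Prod.Lex.lt_iff]
    simp only [ofLex_toLex, OrderDual.toDual_lt_toDual]
    constructor
    · rintro (h | ⟨ha, hb⟩)
      exacts [Or.inl h, Or.inr ⟨ha.symm, hb⟩]
    · rintro (h | ⟨ha, hb⟩)
      exacts [Or.inl h, Or.inr ⟨ha.symm, hb⟩]
  have hdisj : Disjoint (Finset.univ.filter fun j => t y < t j)
      (Finset.univ.filter fun j => t j = t y ∧ η j < η y) := by
    rw [Finset.disjoint_left]
    intro j hj1 hj2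
    simp only [Finset.mem_filter, Finset.mem_univ, true_and] at hj1 hj2
    rw [hj2.1] at hj1
    exact lt_irrefl _ hj1
  rw [rankW, cntGT, h1, Finset.card_union_of_disjoint hdisj]
  omega

lemma cntGT_keyF_self {η : Fin C → ℝ} : cntGT (keyF η η) = cntGT η := by
  funext y
  rw [cntGT, cntGT]
  congr 1
  apply Finset.filter_congr
  intro j _
  rw [keyF, keyF, Prod.Lex.lt_iff]
  simp only [ofLex_toLex, OrderDual.toDual_lt_toDual]
  constructor
  · rintro (h | ⟨ha, hb⟩)
    · exact h
    · rw [ha] at hb; exact absurd hb (lt_irrefl _)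
  · exact fun h => Or.inl h

end AuxKey

/-- AUTKC Bayes optimality (Theorem 4 of the paper): a score vector `s` minimizes the
conditional AUTKC risk `R_K(·, η)` over `ℝ^C` if and only if `s` is top-`K`
ranking-preserving with respect to `η`. -/
theorem autkc_bayes_optimal_iff_ranking_preserving
    (C K : ℕ) (hC : 2 ≤ C) (hK1 : 1 ≤ K) (hKC : K ≤ C)
    (η : Fin C → ℝ) (hnn : ∀ y, 0 ≤ η y) (hsum : ∑ y : Fin C, η y = 1)
    (hdist : Function.Injective η) (s : Fin C → ℝ) :
    (∀ s' : Fin C → ℝ, condRisk K η s ≤ condRisk K η s') ↔ RPK K η s := by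
  classical
  set p : Fin C ≃ Fin C := cntEquiv η hdist with hp
  set b : Fin C → ℝ := fun i => η (p.symm i) with hbdef
  have hpval : ∀ y : Fin C, ((p y : Fin C) : ℕ) = cntGT η y := fun y => rfl
  have hpsymm : ∀ i : Fin C, cntGT η (p.symm i) = (i : ℕ) := by
    intro i
    exact (hpval (p.symm i)).symm.trans (congrArg Fin.val (p.apply_symm_apply i))
  have hbanti : StrictAnti b := by
    intro i j hij
    rcases lt_trichotomy (η (p.symm j)) (η (p.symm i)) with h | h | h
    · exact h
    · exfalso
      have hji : j = i := p.symm.injective (hdist h)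
      rw [hji] at hij
      exact lt_irrefl _ hij
    · exfalso
      have hc := cntGT_lt_of_lt h
      rw [hpsymm i, hpsymm j] at hc
      exact absurd (Fin.lt_def.mp hij) (by omega)
  set q : (Fin C → ℝ) → (Fin C ≃ Fin C) :=
    fun t => cntEquiv (keyF η t) (keyF_injective hdist t) with hq
  have hqval : ∀ t y, ((q t y : Fin C) : ℕ) = cntGT (keyF η t) y := fun t y => rfl
  set σf : (Fin C → ℝ) → Equiv.Perm (Fin C) := fun t => p.symm.trans (q t) with hσf
  have hrisk : ∀ t : Fin C → ℝ,
      condRisk K η t = (1 / (K:ℝ)) * ∑ i : Fin C, b i * wv K (σf t i) := by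
    intro t
    rw [condRisk]
    congr 1
    rw [← Equiv.sum_comp p.symm
      (fun y => η y * ((min (rankW η t y - 1) K : ℕ) : ℝ))]
    apply Finset.sum_congr rfl
    intro i _
    have hr : rankW η t (p.symm i) - 1 = cntGT (keyF η t) (p.symm i) := by
      rw [rankW_eq]; omega
    have hσ : ((σf t i : Fin C) : ℕ) = cntGT (keyF η t) (p.symm i) := rfl
    rw [hr, hbdef, wv, hσ]
  have hσeta : ∀ i : Fin C, σf η i = i := by
    intro i
    apply Fin.ext
    have : ((σf η i : Fin C) : ℕ) = cntGT (keyF η η) (p.symm i) := rfl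
    rw [this, cntGT_keyF_self, hpsymm]
  have hlow : ∀ σ : Equiv.Perm (Fin C),
      ∑ i : Fin C, b i * wv K i ≤ ∑ i : Fin C, b i * wv K (σ i) := by
    intro σ
    have := (antivary_wv (K := K) hbanti).sum_smul_le_sum_smul_comp_perm (σ := σ)
    simpa [smul_eq_mul] using this
  have heqiff : ∀ σ : Equiv.Perm (Fin C),
      (∑ i : Fin C, b i * wv K (σ i) = ∑ i : Fin C, b i * wv K i)
        ↔ ∀ i : Fin C, ((σ i : Fin C) : ℕ) < K → σ i = i := by
    intro σ
    have h := (antivary_wv (K := K) hbanti).sum_smul_comp_perm_eq_sum_smul_iff (σ := σ)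
    rw [show (∑ i : Fin C, b i • wv K (σ i)) = ∑ i : Fin C, b i * wv K (σ i) from by
        simp [smul_eq_mul],
      show (∑ i : Fin C, b i • wv K i) = ∑ i : Fin C, b i * wv K i from by
        simp [smul_eq_mul]] at h
    exact h.trans (antivary_comp_iff hbanti σ)
  have hKpos : (0:ℝ) < 1 / (K:ℝ) := by
    have : (0:ℝ) < (K:ℝ) := by exact_mod_cast hK1
    positivity
  constructor
  · intro hmin
    intro y k hk1 hkK hrank
    have h1 : condRisk K η s ≤ condRisk K η η := hmin η
    rw [hrisk s, hrisk η] at h1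
    have h2 : (∑ i : Fin C, b i * wv K (σf η i)) = ∑ i : Fin C, b i * wv K i := by
      apply Finset.sum_congr rfl
      intro i _
      rw [hσeta i]
    rw [h2] at h1
    have hSle : ∑ i : Fin C, b i * wv K (σf s i) ≤ ∑ i : Fin C, b i * wv K i :=
      le_of_mul_le_mul_left (by exact h1) hKpos
    have heq : ∑ i : Fin C, b i * wv K (σf s i) = ∑ i : Fin C, b i * wv K i :=
      le_antisymm hSle (hlow (σf s))
    have hfix := (heqiff (σf s)).mp heq
    have hcnt : cntGT (keyF η s) y = k - 1 := by
      have := rankW_eq η s y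
      omega
    have hσy : ((σf s (p y) : Fin C) : ℕ) = cntGT (keyF η s) y := by
      show ((q s (p.symm (p y)) : Fin C) : ℕ) = _
      rw [p.symm_apply_apply]
      exact hqval s y
    have hfixy := hfix (p y) (by rw [hσy, hcnt]; omega)
    have hqp : cntGT (keyF η s) y = cntGT η y := by
      have := congrArg (fun z : Fin C => (z : ℕ)) hfixy
      simp only [hσy, hpval] at this
      exact this
    have hkth := kthLargest_cntGT hdist y
    rw [hqp] at hcnt
    rw [hcnt] at hkth
    have : k - 1 + 1 = k := by omega
    rw [this] at hkth
    exact hkth.symm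
  · intro hRPK s'
    rw [hrisk s, hrisk s']
    have heq : ∑ i : Fin C, b i * wv K (σf s i) = ∑ i : Fin C, b i * wv K i := by
      apply (heqiff (σf s)).mpr
      intro i hiK
      have hσy : ((σf s i : Fin C) : ℕ) = cntGT (keyF η s) (p.symm i) := rfl
      rw [hσy] at hiK
      have hrk : rankW η s (p.symm i) = cntGT (keyF η s) (p.symm i) + 1 := by
        rw [rankW_eq]; omega
      have hη1 := hRPK (p.symm i) (cntGT (keyF η s) (p.symm i) + 1) (by omega) (by omega) hrk
      have hη2 := kthLargest_cntGT hdist (p.symm i)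
      have hinj := kthLargest_injOn hdist (cntGT_lt (keyF η s) (p.symm i))
        (cntGT_lt η (p.symm i)) (hη1.symm.trans hη2.symm)
      apply Fin.ext
      rw [hσy, hinj, hpsymm]
    rw [heq]
    exact mul_le_mul_of_nonneg_left (hlow (σf s')) (le_of_lt hKpos)
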